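/- Let c ∈ ℂ, r > 0, and let f : ℂ → ℂ be complex-differentiable on an open set containing the closed disk {z : |z - c| ≤ r}. Let x_0, …, x_n be distinct points in the open disk {z : |z - c| < r}, and define the discrete logarithmic potential U(z) = (1/(n+1)) ∑_{i=0}^n log(1/|z - x_i|) for z ∉ {x_0, …, x_n}. Then for every x in the open disk {z : |z - c| < r} with x ∉ {x_0, …, x_n}, |f(x) - P_n(x)| ≤ (r/(2π))·(∫_0^{2π} |f(c + re^{iθ})|/|c + re^{iθ} - x| dθ)·(exp(sup_{θ∈[0,2π]} U(c + re^{iθ}) - U(x)))^{n+1}, where P_n(x) = ∑_{i=0}^n f(x_i) ∏_{j≠i} (x - x_j)/(x_i - x_j) is the Lagrange interpolating polynomial of f at the nodes. -/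

import Mathlib

open Finset


lemma prod_insert_none' {α M : Type*} [DecidableEq α] [CommMonoid M] (s : Finset α) (g : Option α → M) :
    ∏ o ∈ insert none (s.map Function.Embedding.some), g o = g none * ∏ i ∈ s, g (some i) := by
  rw [Finset.prod_insert (by simp), Finset.prod_map]; rfl

lemma partial_fraction_key {n : ℕ} (x : Fin (n+1) → ℂ) (hx : Function.Injective x)
    (X : ℂ) (hXnode : ∀ i, X ≠ x i) (z : ℂ) (hzX : z ≠ X) (hzx : ∀ i, z ≠ x i) :
    (z - X)⁻¹ - ∑ i, (∏ j ∈ univ.erase i, (X - x j) / (x i - x j)) * (z - x i)⁻¹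
      = (∏ i, (X - x i)) * ((∏ i, (z - x i))⁻¹ * (z - X)⁻¹) := by
  set v : Option (Fin (n+1)) → ℂ := fun o => o.elim X x with hv
  have hvinj : Set.InjOn v (univ : Finset (Option (Fin (n+1)))) := by
    intro a _ b _ hab
    match a, b with
    | none, none => rfl
    | none, some j => exact absurd hab (hXnode j)
    | some i, none => exact absurd hab.symm (hXnode i)
    | some i, some j => exact congrArg some (hx hab)
  have h1 := Lagrange.sum_basis hvinj ⟨none, mem_univ _⟩
  have h2 := congrArg (Polynomial.eval z) h1
  rw [Polynomial.eval_finset_sum, Polynomial.eval_one] at h2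
  have heval : ∀ o, Polynomial.eval z (Lagrange.basis univ v o)
      = ∏ j ∈ univ.erase o, ((v o - v j)⁻¹ * (z - v j)) := by
    intro o
    rw [Lagrange.basis, Polynomial.eval_prod]
    exact Finset.prod_congr rfl fun j _ => by simp [Lagrange.basisDivisor]
  simp only [heval] at h2
  rw [Fintype.sum_option] at h2
  have hnone : (univ : Finset (Option (Fin (n+1)))).erase none = univ.map Function.Embedding.some := by
    ext o; cases o <;> simp
  have hsome : ∀ i : Fin (n+1), (univ : Finset (Option (Fin (n+1)))).erase (some i)
      = insert none ((univ.erase i).map Function.Embedding.some) := by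
    intro i; ext o; cases o <;> simp
  have hv1 : v none = X := rfl
  have hv2 : ∀ i, v (some i) = x i := fun _ => rfl
  rw [hnone] at h2
  simp only [hsome, prod_insert_none', Finset.prod_map,
    Function.Embedding.some_apply, hv1, hv2] at h2
  -- h2 : ∏ i, (X - x i)⁻¹ * (z - x i)
  --      + ∑ i, (x i - X)⁻¹ * (z - X) * ∏ j ∈ erase i, (x i - x j)⁻¹ * (z - x j) = 1
  have hXx : ∀ i, X - x i ≠ 0 := fun i => sub_ne_zero.2 (hXnode i)
  have hzx' : ∀ i, z - x i ≠ 0 := fun i => sub_ne_zero.2 (hzx i)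
  have hzX' : z - X ≠ 0 := sub_ne_zero.2 hzX
  have hxx : ∀ i j : Fin (n+1), j ≠ i → x i - x j ≠ 0 :=
    fun i j h => sub_ne_zero.2 fun e => h (hx e.symm)
  have hωX : (∏ i, (X - x i)) ≠ 0 := Finset.prod_ne_zero_iff.2 fun i _ => hXx i
  have hωz : (∏ i, (z - x i)) ≠ 0 := Finset.prod_ne_zero_iff.2 fun i _ => hzx' i
  have key1 : (∏ i, (X - x i)) * ((∏ i, (z - x i))⁻¹ * (z - X)⁻¹) *
      (∏ i, ((X - x i)⁻¹ * (z - x i))) = (z - X)⁻¹ := by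
    rw [Finset.prod_mul_distrib, Finset.prod_inv_distrib]
    field_simp
  have key2 : ∀ i, (∏ i, (X - x i)) * ((∏ i, (z - x i))⁻¹ * (z - X)⁻¹) *
      ((x i - X)⁻¹ * (z - X) * ∏ j ∈ univ.erase i, ((x i - x j)⁻¹ * (z - x j)))
      = -((∏ j ∈ univ.erase i, (X - x j) / (x i - x j)) * (z - x i)⁻¹) := by
    intro i
    have hpe : ∀ w : ℂ, (∏ j, (w - x j)) = (w - x i) * ∏ j ∈ univ.erase i, (w - x j) :=
      fun w => (Finset.mul_prod_erase _ _ (mem_univ i)).symm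
    have hpz : (∏ j ∈ univ.erase i, (z - x j)) ≠ 0 :=
      Finset.prod_ne_zero_iff.2 fun j hj => hzx' j
    have hpx : (∏ j ∈ univ.erase i, (x i - x j)) ≠ 0 :=
      Finset.prod_ne_zero_iff.2 fun j hj => hxx i j (Finset.ne_of_mem_erase hj)
    have hxiX : x i - X ≠ 0 := sub_ne_zero.2 fun e => hXnode i e.symm
    rw [hpe X, hpe z, Finset.prod_mul_distrib, Finset.prod_inv_distrib,
      Finset.prod_div_distrib]
    have halg : ∀ a p q s t w : ℂ, a ≠ 0 → q ≠ 0 → s ≠ 0 → t ≠ 0 → w ≠ 0 →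
        (a * p) * ((t * s)⁻¹ * w⁻¹) * ((-a)⁻¹ * w * (q⁻¹ * s)) = -(p / q * t⁻¹) := by
      intro a p q s t w ha hq hs ht hw
      field_simp
    have hb : x i - X = -(X - x i) := by ring
    rw [hb]
    exact halg (X - x i) _ _ _ _ _ (hXx i) hpx hpz (hzx' i) hzX' 
  rw [eq_comm]
  calc (∏ i, (X - x i)) * ((∏ i, (z - x i))⁻¹ * (z - X)⁻¹)
      = (∏ i, (X - x i)) * ((∏ i, (z - x i))⁻¹ * (z - X)⁻¹) *
        ((∏ i, ((X - x i)⁻¹ * (z - x i))) +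
         ∑ i, ((x i - X)⁻¹ * (z - X) * ∏ j ∈ univ.erase i, ((x i - x j)⁻¹ * (z - x j)))) := by
        rw [h2, mul_one]
    _ = (z - X)⁻¹ + ∑ i, -((∏ j ∈ univ.erase i, (X - x j) / (x i - x j)) * (z - x i)⁻¹) := by
        rw [mul_add, Finset.mul_sum, key1]
        exact congrArg _ (Finset.sum_congr rfl fun i _ => key2 i)
    _ = (z - X)⁻¹ - ∑ i, (∏ j ∈ univ.erase i, (X - x j) / (x i - x j)) * (z - x i)⁻¹ := by
        rw [Finset.sum_neg_distrib, ← sub_eq_add_neg]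

/-- Potential-form error bound (1c) for polynomial interpolation, with the contour taken
to be a circle of center `c` and radius `r`; `Upot` is the discrete logarithmic potential
of the uniform measure on the nodes. -/
theorem polynomial_interpolation_potential_bound (c : ℂ) (r : ℝ) (hr : 0 < r) (f : ℂ → ℂ)
    (U : Set ℂ) (hUopen : IsOpen U) (hUsub : Metric.closedBall c r ⊆ U)
    (hf : DifferentiableOn ℂ f U)
    (n : ℕ) (x : Fin (n + 1) → ℂ) (hx : Function.Injective x)
    (hxball : ∀ i, x i ∈ Metric.ball c r)
    (Upot : ℂ → ℝ)
    (hUpot : ∀ z, Upot z = (1 / (n + 1)) * ∑ i, Real.log (1 / ‖z - x i‖))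
    (P : ℂ → ℂ)
    (hP : ∀ X, P X = ∑ i, f (x i) * ∏ j ∈ univ.erase i, (X - x j) / (x i - x j))
    (X : ℂ) (hX : X ∈ Metric.ball c r) (hXnode : ∀ i, X ≠ x i) :
    ‖f X - P X‖ ≤ (r / (2 * Real.pi)) *
      (∫ θ in (0:ℝ)..(2 * Real.pi),
        ‖f (c + (r : ℂ) * Complex.exp ((θ : ℂ) * Complex.I))‖ /
          ‖c + (r : ℂ) * Complex.exp ((θ : ℂ) * Complex.I) - X‖) *
      (Real.exp ((⨆ θ : Set.Icc (0:ℝ) (2 * Real.pi),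
          Upot (c + (r : ℂ) * Complex.exp (((θ : ℝ) : ℂ) * Complex.I))) - Upot X)) ^ (n + 1) := by
  have hπ : (0:ℝ) < 2 * Real.pi := by positivity
  set γ : ℝ → ℂ := circleMap c r with hγ
  have hγc : ∀ θ : ℝ, γ θ = c + (r : ℂ) * Complex.exp ((θ : ℂ) * Complex.I) := fun θ => rfl
  -- points on the circle avoid the nodes and X
  have hsphere : ∀ θ : ℝ, γ θ ∈ Metric.sphere c r := fun θ => circleMap_mem_sphere c hr.le θ
  have hne : ∀ (θ : ℝ) (w : ℂ), w ∈ Metric.ball c r → γ θ ≠ w := by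
    intro θ w hw h
    have h1 := Metric.mem_sphere.mp (hsphere θ)
    rw [h] at h1
    exact absurd h1 (ne_of_lt (Metric.mem_ball.mp hw))
  have hzx : ∀ (θ : ℝ) i, γ θ ≠ x i := fun θ i => hne θ _ (hxball i)
  have hzX : ∀ θ : ℝ, γ θ ≠ X := fun θ => hne θ _ hX
  set L : Fin (n+1) → ℂ := fun i => ∏ j ∈ univ.erase i, (X - x j) / (x i - x j) with hL
  set G : ℝ → ℂ := fun θ => deriv (circleMap c r) θ *
      (((γ θ - X)⁻¹ - ∑ i, L i * (γ θ - x i)⁻¹) * f (γ θ)) with hG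
  -- continuity facts
  have hfc : Continuous fun θ => f (γ θ) :=
    hf.continuousOn.comp_continuous (continuous_circleMap c r)
      (fun θ => hUsub (Metric.sphere_subset_closedBall (hsphere θ)))
  have hDc : Continuous (deriv (circleMap c r)) := by
    have : deriv (circleMap c r) = fun θ => circleMap 0 r θ * Complex.I :=
      funext fun θ => deriv_circleMap c r θ
    rw [this]; exact (continuous_circleMap 0 r).mul continuous_const
  have hinvc : ∀ w : ℂ, w ∈ Metric.ball c r → Continuous fun θ => (γ θ - w)⁻¹ := by
    intro w hw
    exact ((continuous_circleMap c r).sub continuous_const).inv₀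
      (fun θ => sub_ne_zero.2 (hne θ w hw))
  have hGc : Continuous G := by
    apply hDc.mul
    apply Continuous.mul _ hfc
    exact (hinvc X hX).sub (continuous_finset_sum _ fun i _ =>
      continuous_const.mul (hinvc (x i) (hxball i)))
  -- Cauchy integral formula
  have h2πI : (2 * Real.pi * Complex.I : ℂ) ≠ 0 := by
    simp [Real.pi_ne_zero, Complex.I_ne_zero]
  have hCw : ∀ w ∈ Metric.ball c r, f w = (2 * Real.pi * Complex.I : ℂ)⁻¹ *
      ∫ θ in (0:ℝ)..(2*Real.pi), deriv (circleMap c r) θ * ((γ θ - w)⁻¹ * f (γ θ)) := by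
    intro w hw
    have := (hf.diffContOnCl_ball hUsub).circleIntegral_sub_inv_smul hw
    rw [show (∮ z in C(c, r), (z - w)⁻¹ • f z)
        = ∫ θ in (0:ℝ)..(2*Real.pi), deriv (circleMap c r) θ * ((γ θ - w)⁻¹ * f (γ θ)) from by
      simp only [circleIntegral, smul_eq_mul]; rfl] at this
    rw [this, smul_eq_mul, inv_mul_cancel_left₀ h2πI]
  have hLdef : ∀ i, (∏ j ∈ univ.erase i, (X - x j) / (x i - x j)) = L i := fun _ => rfl
  have hint : ∀ w ∈ Metric.ball c r, IntervalIntegrable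
      (fun θ => deriv (circleMap c r) θ * ((γ θ - w)⁻¹ * f (γ θ)))
      MeasureTheory.volume 0 (2*Real.pi) :=
    fun w hw => (hDc.mul ((hinvc w hw).mul hfc)).intervalIntegrable _ _
  -- the main representation
  have hmain : f X - P X = (2 * Real.pi * Complex.I : ℂ)⁻¹ *
      ∫ θ in (0:ℝ)..(2*Real.pi), G θ := by
    have hintsum : IntervalIntegrable
        (fun θ => ∑ i, L i * (deriv (circleMap c r) θ * ((γ θ - x i)⁻¹ * f (γ θ))))
        MeasureTheory.volume 0 (2*Real.pi) :=
      Continuous.intervalIntegrable (continuous_finset_sum _ fun i _ =>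
        continuous_const.mul (hDc.mul ((hinvc (x i) (hxball i)).mul hfc))) _ _
    have hsum : ((∫ θ in (0:ℝ)..(2*Real.pi), deriv (circleMap c r) θ * ((γ θ - X)⁻¹ * f (γ θ)))
        - ∑ i, L i * ∫ θ in (0:ℝ)..(2*Real.pi),
            deriv (circleMap c r) θ * ((γ θ - x i)⁻¹ * f (γ θ)))
        = ∫ θ in (0:ℝ)..(2*Real.pi), G θ := by
      rw [eq_comm]
      calc (∫ θ in (0:ℝ)..(2*Real.pi), G θ)
          = ∫ θ in (0:ℝ)..(2*Real.pi), (deriv (circleMap c r) θ * ((γ θ - X)⁻¹ * f (γ θ))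
              - ∑ i, L i * (deriv (circleMap c r) θ * ((γ θ - x i)⁻¹ * f (γ θ)))) := by
            apply intervalIntegral.integral_congr
            intro θ _
            have hs : ∑ i, L i * (deriv (circleMap c r) θ * ((γ θ - x i)⁻¹ * f (γ θ)))
                = (deriv (circleMap c r) θ) * ((∑ i, L i * (γ θ - x i)⁻¹) * f (γ θ)) := by
              rw [Finset.sum_mul, Finset.mul_sum]
              exact Finset.sum_congr rfl fun i _ => by ring
            simp only [hG, hs]
            ring
        _ = (∫ θ in (0:ℝ)..(2*Real.pi), deriv (circleMap c r) θ * ((γ θ - X)⁻¹ * f (γ θ)))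
            - ∫ θ in (0:ℝ)..(2*Real.pi),
                ∑ i, L i * (deriv (circleMap c r) θ * ((γ θ - x i)⁻¹ * f (γ θ))) :=
          intervalIntegral.integral_sub (hint X hX) hintsum
        _ = ((∫ θ in (0:ℝ)..(2*Real.pi), deriv (circleMap c r) θ * ((γ θ - X)⁻¹ * f (γ θ)))
            - ∑ i, L i * ∫ θ in (0:ℝ)..(2*Real.pi),
                deriv (circleMap c r) θ * ((γ θ - x i)⁻¹ * f (γ θ))) := by
          rw [intervalIntegral.integral_finset_sum
            (fun i _ => ((hint (x i) (hxball i)).const_mul (L i)))]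
          congr 1
          exact Finset.sum_congr rfl fun i _ => intervalIntegral.integral_const_mul _ _
    have hfx : ∀ i, f (x i) = (2 * Real.pi * Complex.I : ℂ)⁻¹ *
        ∫ θ in (0:ℝ)..(2*Real.pi), deriv (circleMap c r) θ * ((γ θ - x i)⁻¹ * f (γ θ)) :=
      fun i => hCw (x i) (hxball i)
    rw [hCw X hX, hP X]
    simp only [hfx, hLdef]
    rw [← hsum, mul_sub]
    congr 1
    rw [Finset.mul_sum]
    exact Finset.sum_congr rfl fun i _ => by ring
  -- the product over nodes in terms of the potential
  have hcast : ((n:ℝ)+1) ≠ 0 := by positivity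
  have hprod : ∀ z : ℂ, (∀ i, z ≠ x i) →
      ‖∏ i, (z - x i)‖ = Real.exp (-(((n:ℝ)+1) * Upot z)) := by
    intro z hz
    have h0 : ∀ i : Fin (n+1), ‖z - x i‖ ≠ 0 :=
      fun i => norm_ne_zero_iff.2 (sub_ne_zero.2 (hz i))
    have hpos : 0 < ‖∏ i, (z - x i)‖ := by
      rw [norm_prod]
      exact Finset.prod_pos fun i _ => (h0 i).lt_of_le' (norm_nonneg _)
    rw [← Real.exp_log hpos]
    congr 1
    rw [norm_prod, Real.log_prod (fun i _ => h0 i), hUpot z]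
    have hterm : ∀ i : Fin (n+1), Real.log (1 / ‖z - x i‖)
        = -Real.log (‖z - x i‖) := by
      intro i; rw [one_div, Real.log_inv]
    simp only [hterm]
    rw [Finset.sum_neg_distrib]
    field_simp
  -- fold the goal into γ
  simp only [← hγc]
  set S : ℝ := ⨆ θ : Set.Icc (0:ℝ) (2 * Real.pi), Upot (γ θ) with hSdef
  set M : ℝ := Real.exp (S - Upot X) ^ (n+1) with hM
  -- the sup bound
  have hUcont : Continuous fun θ : ℝ => Upot (γ θ) := by
    have he : (fun θ : ℝ => Upot (γ θ))
        = fun θ => (1/((n:ℝ)+1)) * ∑ i, Real.log (1 / ‖γ θ - x i‖) :=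
      funext fun θ => hUpot _
    rw [he]
    refine continuous_const.mul (continuous_finset_sum _ fun i _ => ?_)
    have he2 : (fun θ : ℝ => Real.log (1 / ‖γ θ - x i‖))
        = fun θ => -Real.log (‖γ θ - x i‖) := by
      funext θ; rw [one_div, Real.log_inv]
    rw [he2]
    apply Continuous.neg
    apply Continuous.log
    · exact continuous_norm.comp ((continuous_circleMap c r).sub continuous_const)
    · exact fun θ => norm_ne_zero_iff.2 (sub_ne_zero.2 (hzx θ i))
  have hbdd : BddAbove (Set.range fun θ : Set.Icc (0:ℝ) (2*Real.pi) => Upot (γ θ)) := by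
    have h1 := (isCompact_Icc (a := (0:ℝ)) (b := 2*Real.pi)).bddAbove_image hUcont.continuousOn
    rwa [Set.image_eq_range] at h1
  have hS : ∀ θ ∈ Set.Icc (0:ℝ) (2*Real.pi), Upot (γ θ) ≤ S :=
    fun θ hθ => le_ciSup hbdd (⟨θ, hθ⟩ : Set.Icc (0:ℝ) (2*Real.pi))
  -- pointwise norm computation
  have hq : ∀ θ : ℝ, ‖G θ‖ = r * (‖f (γ θ)‖ / ‖γ θ - X‖) *
      Real.exp (((n:ℝ)+1) * Upot (γ θ) - ((n:ℝ)+1) * Upot X) := by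
    intro θ
    have hK := partial_fraction_key x hx X hXnode (γ θ) (hzX θ) (hzx θ)
    simp only [hLdef] at hK
    have hexp : Real.exp (((n:ℝ)+1) * Upot (γ θ) - ((n:ℝ)+1) * Upot X)
        = Real.exp (-(((n:ℝ)+1) * Upot X)) * (Real.exp (-(((n:ℝ)+1) * Upot (γ θ))))⁻¹ := by
      rw [← Real.exp_neg, ← Real.exp_add]
      ring_nf
    simp only [hG]
    rw [norm_mul, hK, norm_mul, norm_mul, norm_mul, norm_inv, norm_inv,
      hprod X hXnode, hprod (γ θ) (fun i => hzx θ i),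
      deriv_circleMap, norm_mul, Complex.norm_I, norm_circleMap_zero, abs_of_pos hr, hexp]
    ring
  have hptwise : ∀ θ ∈ Set.Icc (0:ℝ) (2*Real.pi), ‖G θ‖ ≤
      r * (‖f (γ θ)‖ / ‖γ θ - X‖) * M := by
    intro θ hθ
    rw [hq θ, hM]
    have hexp2 : Real.exp (S - Upot X) ^ (n+1) = Real.exp (((n:ℝ)+1) * (S - Upot X)) := by
      rw [← Real.exp_nat_mul]
      push_cast
      ring_nf
    rw [hexp2]
    apply mul_le_mul_of_nonneg_left _ (by positivity)
    apply Real.exp_le_exp.2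
    have h1 : ((n:ℝ)+1) * Upot (γ θ) ≤ ((n:ℝ)+1) * S :=
      mul_le_mul_of_nonneg_left (hS θ hθ) (by positivity)
    linarith
  -- integrability of the two sides
  have hnorm_int : IntervalIntegrable (fun θ => ‖G θ‖)
      MeasureTheory.volume 0 (2*Real.pi) := hGc.norm.intervalIntegrable _ _
  have habsne : ∀ θ : ℝ, ‖γ θ - X‖ ≠ 0 :=
    fun θ => norm_ne_zero_iff.2 (sub_ne_zero.2 (hzX θ))
  have hqcont : Continuous fun θ : ℝ => ‖f (γ θ)‖ / ‖γ θ - X‖ :=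
    (continuous_norm.comp hfc).div
      (continuous_norm.comp ((continuous_circleMap c r).sub continuous_const)) habsne
  have hq_int : IntervalIntegrable
      (fun θ => r * (‖f (γ θ)‖ / ‖γ θ - X‖) * M)
      MeasureTheory.volume 0 (2*Real.pi) :=
    ((continuous_const.mul hqcont).mul continuous_const).intervalIntegrable _ _
  have habs2π : ‖2 * ↑Real.pi * Complex.I‖ = 2 * Real.pi := by
    rw [norm_mul, norm_mul, Complex.norm_two, Complex.norm_I, Complex.norm_real, Real.norm_eq_abs,
      abs_of_pos Real.pi_pos, mul_one]
  calc ‖f X - P X‖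
      = (2*Real.pi)⁻¹ * ‖∫ θ in (0:ℝ)..(2*Real.pi), G θ‖ := by
        rw [hmain, norm_mul, norm_inv, habs2π]
    _ ≤ (2*Real.pi)⁻¹ * ∫ θ in (0:ℝ)..(2*Real.pi), ‖G θ‖ := by
        apply mul_le_mul_of_nonneg_left _ (by positivity)
        exact intervalIntegral.norm_integral_le_integral_norm hπ.le
    _ ≤ (2*Real.pi)⁻¹ * ∫ θ in (0:ℝ)..(2*Real.pi),
          r * (‖f (γ θ)‖ / ‖γ θ - X‖) * M := by
        apply mul_le_mul_of_nonneg_left _ (by positivity)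
        exact intervalIntegral.integral_mono_on hπ.le hnorm_int hq_int hptwise
    _ = (r / (2*Real.pi)) *
          (∫ θ in (0:ℝ)..(2*Real.pi), ‖f (γ θ)‖ / ‖γ θ - X‖) * M := by
        rw [show (fun θ : ℝ => r * (‖f (γ θ)‖ / ‖γ θ - X‖) * M)
            = fun θ : ℝ => (r * M) * (‖f (γ θ)‖ / ‖γ θ - X‖) from
          funext fun θ => by ring]
        rw [intervalIntegral.integral_const_mul]
        ring
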